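/- For pairwise distinct real numbers x_1, …, x_N, the 2N polynomials l_i(X)² and (X − x_i)·l_i(X)², for i = 1, …, N, form a basis of the real vector space of polynomials of degree at most 2N − 1, where l_i is the i-th Lagrange basis polynomial associated to the nodes x_1, …, x_N. -/

import Mathlib

open Polynomial

/-- **The GG-QMoM test-function basis.**
For pairwise distinct nodes `x_1, …, x_N`, the `2N` polynomials `l_i(X)²` and
`(X − x_i)·l_i(X)²`, `i = 1, …, N`, form a basis of the space of real polynomials of
degree at most `2N − 1` (i.e. of `degreeLT ℝ (2N)`), where `l_i` is the `i`-th Lagrange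
basis polynomial associated to the nodes. -/
theorem lagrange_squares_basis {N : ℕ} (hN : 1 ≤ N) (x : Fin N → ℝ)
    (hx : Function.Injective x) :
    ∃ B : Module.Basis (Fin N ⊕ Fin N) ℝ (Polynomial.degreeLT ℝ (2 * N)),
      (∀ i : Fin N, (B (Sum.inl i) : Polynomial ℝ) =
        (Lagrange.basis Finset.univ x i) ^ 2) ∧
      (∀ i : Fin N, (B (Sum.inr i) : Polynomial ℝ) =
        (X - C (x i)) * (Lagrange.basis Finset.univ x i) ^ 2) := by
  classical
  haveI : Nonempty (Fin N) := ⟨⟨0, hN⟩⟩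
  set l : Fin N → ℝ[X] := Lagrange.basis Finset.univ x with hl
  have hinj : Set.InjOn x (Finset.univ : Finset (Fin N)) := hx.injOn
  have hlne : ∀ i, l i ≠ 0 := fun i => Lagrange.basis_ne_zero hinj (Finset.mem_univ i)
  have hnd : ∀ i, (l i).natDegree = N - 1 := by
    intro i
    simpa using Lagrange.natDegree_basis hinj (Finset.mem_univ i)
  let P : Fin N ⊕ Fin N → ℝ[X] :=
    Sum.elim (fun i => (l i) ^ 2) (fun i => (X - C (x i)) * (l i) ^ 2)
  have hdeg : ∀ s, P s ∈ degreeLT ℝ (2 * N) := by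
    rintro (i | i) <;> simp only [P, Sum.elim_inl, Sum.elim_inr] <;> rw [mem_degreeLT]
    · have h0 : (l i) ^ 2 ≠ 0 := pow_ne_zero _ (hlne i)
      rw [degree_eq_natDegree h0, natDegree_pow, hnd i]
      exact_mod_cast by omega
    · have h0 : (X - C (x i)) * (l i) ^ 2 ≠ 0 :=
        mul_ne_zero (X_sub_C_ne_zero _) (pow_ne_zero _ (hlne i))
      rw [degree_eq_natDegree h0, natDegree_mul (X_sub_C_ne_zero _) (pow_ne_zero _ (hlne i)),
        natDegree_X_sub_C, natDegree_pow, hnd i]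
      exact_mod_cast by omega
  let f : Fin N ⊕ Fin N → degreeLT ℝ (2 * N) := fun s => ⟨P s, hdeg s⟩
  have hev : ∀ i j : Fin N, (l i).eval (x j) = if i = j then 1 else 0 := by
    intro i j
    by_cases h : i = j
    · subst h; simp [hl, Lagrange.eval_basis_self hinj (Finset.mem_univ i)]
    · simp [h, hl, Lagrange.eval_basis_of_ne h (Finset.mem_univ j)]
  have hPli : LinearIndependent ℝ P := by
    rw [Fintype.linearIndependent_iff]
    intro g hg
    rw [Fintype.sum_sum_type] at hg
    have hA : ∀ j, g (Sum.inl j) = 0 := by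
      intro j
      have h := congrArg (eval (x j)) hg
      simpa [P, eval_finset_sum, hev, ite_pow, mul_ite, Finset.sum_ite_eq', sub_self] using h
    have hq : (∑ i, g (Sum.inr i) • ((X - C (x i)) * (l i) ^ 2)) = 0 := by
      simpa [P, hA] using hg
    have hB : ∀ j, g (Sum.inr j) = 0 := by
      intro j
      have h := congrArg (fun p => (derivative p).eval (x j)) hq
      simpa [derivative_sum, derivative_smul, derivative_mul, derivative_pow, derivative_sub,
        eval_finset_sum, hev, ite_pow, mul_ite, ite_mul, Finset.sum_add_distrib, Finset.sum_ite_eq', sub_self] using h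
    rintro (j | j)
    exacts [hA j, hB j]
  have hli : LinearIndependent ℝ f := by
    apply LinearIndependent.of_comp (degreeLT ℝ (2 * N)).subtype
    exact hPli
  have hcard : Fintype.card (Fin N ⊕ Fin N) = Module.finrank ℝ (degreeLT ℝ (2 * N)) := by
    rw [(degreeLTEquiv ℝ (2 * N)).finrank_eq]
    simp [two_mul]
  refine ⟨basisOfLinearIndependentOfCardEqFinrank hli hcard, ?_, ?_⟩ <;> intro i <;>
    rw [coe_basisOfLinearIndependentOfCardEqFinrank] <;> rfl
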